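/- Let a be an aperiodic cycle of length r > 1. Let γ₁(a) be the number of entries ≥ 0, γ₃(a) = Σ ε*(b) over positive blocs b, and θ(a) = Σ θ(p) over positive parts p. Then θ(a) = γ₁(a) + γ₃(a). -/

import Mathlib

/-- A function `a : ℤ → ℤ` has period `r`. -/
def CyclePeriodic (a : ℤ → ℤ) (r : ℤ) : Prop := ∀ i, a (i + r) = a i

/-- `a` is an aperiodic cycle of length `r`: it has period `r` and no smaller
positive period. -/
def CycleAperiodic (a : ℤ → ℤ) (r : ℤ) : Prop :=
  CyclePeriodic a r ∧ ∀ d : ℤ, 0 < d → d < r → ¬ CyclePeriodic a d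

/-- `i` is the first index of a bloc (a maximal run of equal consecutive entries). -/
def blocStart (a : ℤ → ℤ) (i : ℤ) : Prop := a (i - 1) ≠ a i

instance (a : ℤ → ℤ) (i : ℤ) : Decidable (blocStart a i) :=
  inferInstanceAs (Decidable (_ ≠ _))

/-- The length of the bloc starting at `i`. -/
noncomputable def blocLen (a : ℤ → ℤ) (i : ℤ) : ℤ :=
  sInf {l : ℤ | 0 < l ∧ a (i + l) ≠ a i}

/-- `ε` of the bloc starting at `i`: `1` if locally maximal (both neighbouring
blocs have strictly smaller entries), `-1` if locally minimal, `0` otherwise. -/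
noncomputable def blocEps (a : ℤ → ℤ) (i : ℤ) : ℤ :=
  if a (i - 1) < a i ∧ a (i + blocLen a i) < a i then 1
  else if a i < a (i - 1) ∧ a i < a (i + blocLen a i) then -1
  else 0

/-- `ε*` of the bloc starting at `i`: equal to `ε`, except it is `0` for a
locally maximal bloc with entry `0`. -/
noncomputable def blocEpsStar (a : ℤ → ℤ) (i : ℤ) : ℤ :=
  if a i = 0 ∧ blocEps a i = 1 then 0 else blocEps a i

/-- `i` is the first index of a positive part (a maximal run of entries `≥ 0`). -/
def partStart (a : ℤ → ℤ) (i : ℤ) : Prop := 0 ≤ a i ∧ a (i - 1) < 0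

instance (a : ℤ → ℤ) (i : ℤ) : Decidable (partStart a i) :=
  inferInstanceAs (Decidable (_ ∧ _))

/-- The length of the positive part starting at `i`. -/
noncomputable def partLen (a : ℤ → ℤ) (i : ℤ) : ℤ :=
  sInf {l : ℤ | 0 < l ∧ a (i + l) < 0}

/-- `θ(p)` for the positive part `p` starting at `i`: `l(p)` if `p` is a single
bloc of zeroes, and `1 + l(p)` otherwise.  (The case `l(p) = r` does not occur
for a part with a genuine start.) -/
noncomputable def thetaP (a : ℤ → ℤ) (i : ℤ) : ℤ :=
  if ∀ k ∈ Finset.Ico i (i + partLen a i), a k = 0 then partLen a i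
  else partLen a i + 1

/-- `θ(a) = Σ θ(p)` over the positive parts of `a`, computed from the window
`[t, t+r)`; when all entries are `≥ 0` the whole cycle is a single positive
part `p` with `θ(p) = l(p) = r`. -/
noncomputable def thetaSum (a : ℤ → ℤ) (r t : ℤ) : ℤ :=
  if ∀ j ∈ Finset.Ico t (t + r), 0 ≤ a j then r
  else ∑ i ∈ Finset.Ico t (t + r), if partStart a i then thetaP a i else 0

/-- `γ₁(a)` : the number of entries of `a` that are `≥ 0`. -/
noncomputable def gammaOne (a : ℤ → ℤ) (r t : ℤ) : ℤ :=
  ∑ i ∈ Finset.Ico t (t + r), if 0 ≤ a i then 1 else 0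

/-- `γ₂(a) = Σ max(aᵢ, 0)`. -/
noncomputable def gammaTwo (a : ℤ → ℤ) (r t : ℤ) : ℤ :=
  ∑ i ∈ Finset.Ico t (t + r), max (a i) 0

/-- `γ₃(a) = Σ ε*(b)` over the positive blocs of `a`. -/
noncomputable def gammaThree (a : ℤ → ℤ) (r t : ℤ) : ℤ :=
  ∑ i ∈ Finset.Ico t (t + r),
    if blocStart a i ∧ 0 ≤ a i then blocEpsStar a i else 0

def sg (a : ℤ → ℤ) (i : ℤ) : ℤ :=
  if a (i - 1) < a i then 1 else if a i < a (i - 1) then -1 else 0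

def cpos (a : ℤ → ℤ) (i : ℤ) : ℤ := if 0 ≤ a i then 1 else 0

section Aux
variable {a : ℤ → ℤ} {r : ℤ}

lemma per_mul (hp : CyclePeriodic a r) (k x : ℤ) : a (x + k * r) = a x := by
  induction k using Int.induction_on with
  | zero => simp
  | succ n ih =>
      have h := hp (x + n * r)
      rw [show x + ((n : ℤ) + 1) * r = x + n * r + r by ring, h, ih]
  | pred n ih =>
      have h := hp (x + (-(n : ℤ) - 1) * r)
      rw [show x + (-(n : ℤ) - 1) * r + r = x + (-(n : ℤ)) * r by ring] at h
      have h2 : a (x + (-(n : ℤ) - 1) * r) = a x := by rw [← h]; exact ih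
      convert h2 using 2

lemma per_sub (hp : CyclePeriodic a r) (x : ℤ) : a (x - r) = a x := by
  have := per_mul hp (-1) x; rw [show x + (-1) * r = x - r by ring] at this; exact this

/-- reduce any index into the window `[t, t+r)` keeping track of the shift -/
lemma reduce (hp : CyclePeriodic a r) (hr : 0 < r) (t x : ℤ) :
    ∃ k : ℤ, t ≤ x + k * r ∧ x + k * r < t + r := by
  have h1 : 0 ≤ (x - t) % r := Int.emod_nonneg _ hr.ne'
  have h1' : (x - t) % r < r := Int.emod_lt_of_pos _ hr
  have h2 : (x - t) % r + r * ((x - t) / r) = x - t := Int.emod_add_mul_ediv _ _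
  have h3 : -((x - t) / r) * r = -(r * ((x - t) / r)) := by ring
  exact ⟨-((x - t) / r), by omega, by omega⟩

lemma not_const (hr : 1 < r) (hap : CycleAperiodic a r) : ∃ m, a (m + 1) ≠ a m := by
  by_contra h
  push_neg at h
  exact hap.2 1 one_pos hr (fun i => by simpa using h i)

lemma blocLen_spec (hp : CyclePeriodic a r) (hr : 1 < r) (hap : CycleAperiodic a r) (i : ℤ) :
    (0 < blocLen a i ∧ blocLen a i < r) ∧ a (i + blocLen a i) ≠ a i ∧
      ∀ l, 0 ≤ l → l < blocLen a i → a (i + l) = a i := by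
  have hr0 : 0 < r := by omega
  obtain ⟨m, hm⟩ := not_const hr hap
  have hex : ∃ l, 0 < l ∧ l ≤ r ∧ a (i + l) ≠ a i := by
    by_contra h
    push_neg at h
    obtain ⟨k, hw1, hw2⟩ := reduce hp hr0 i m
    set w := m + k * r with hw
    have hwa : a w = a m := per_mul hp k m
    have hwa1 : a (w + 1) = a (m + 1) := by
      rw [show w + 1 = (m + 1) + k * r by omega]; exact per_mul hp k (m + 1)
    have h1 : a w = a i := by
      rcases eq_or_lt_of_le hw1 with h' | h'
      · rw [← h']
      · have := h (w - i) (by omega) (by omega); rwa [show i + (w - i) = w by ring] at this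
    have h2 : a (w + 1) = a i := by
      have := h (w + 1 - i) (by omega) (by omega)
      rwa [show i + (w + 1 - i) = w + 1 by ring] at this
    exact hm (by rw [← hwa1, ← hwa, h1, h2])
  obtain ⟨l₀, hl₀1, hl₀2, hl₀3⟩ := hex
  have hne : {l : ℤ | 0 < l ∧ a (i + l) ≠ a i}.Nonempty := ⟨l₀, hl₀1, hl₀3⟩
  have hbdd : BddBelow {l : ℤ | 0 < l ∧ a (i + l) ≠ a i} := ⟨0, fun x hx => hx.1.le⟩
  have hbleq : blocLen a i = sInf {l : ℤ | 0 < l ∧ a (i + l) ≠ a i} := rfl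
  have hmem := Int.csInf_mem hne hbdd
  rw [← hbleq] at hmem
  have hle : blocLen a i ≤ l₀ := by rw [hbleq]; exact csInf_le hbdd ⟨hl₀1, hl₀3⟩
  have hlt : blocLen a i < r := by
    rcases eq_or_lt_of_le (le_trans hle hl₀2) with h' | h'
    · exfalso; apply hmem.2; rw [h']; exact hp i
    · exact h'
  refine ⟨⟨hmem.1, hlt⟩, hmem.2, fun l hl0 hl => ?_⟩
  rcases eq_or_lt_of_le hl0 with h' | h'
  · rw [← h']; norm_num
  · by_contra hne'
    have : blocLen a i ≤ l := by rw [hbleq]; exact csInf_le hbdd ⟨h', hne'⟩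
    omega

lemma blocLen_per (hp : CyclePeriodic a r) (i : ℤ) : blocLen a (i + r) = blocLen a i := by
  unfold blocLen
  congr 1
  ext l
  have h1 : a (i + r + l) = a (i + l) := by
    rw [show i + r + l = (i + l) + 1 * r by ring]; exact per_mul hp 1 _
  simp [h1, hp i]

lemma blocStart_per (hp : CyclePeriodic a r) (i : ℤ) : blocStart a (i + r) ↔ blocStart a i := by
  unfold blocStart
  rw [show i + r - 1 = (i - 1) + r by ring, hp, hp]

end Aux

section Aux2
variable {a : ℤ → ℤ} {r : ℤ}

/-- the entry just before the end of the bloc equals the bloc entry -/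
lemma bloc_last (hp : CyclePeriodic a r) (hr : 1 < r) (hap : CycleAperiodic a r) (i : ℤ) :
    a (i + blocLen a i - 1) = a i := by
  obtain ⟨⟨h1, _⟩, _, hconst⟩ := blocLen_spec hp hr hap i
  have := hconst (blocLen a i - 1) (by omega) (by omega)
  rwa [show i + (blocLen a i - 1) = i + blocLen a i - 1 by ring] at this

lemma next_blocStart (hp : CyclePeriodic a r) (hr : 1 < r) (hap : CycleAperiodic a r) (i : ℤ) :
    blocStart a (i + blocLen a i) := by
  obtain ⟨_, hne, _⟩ := blocLen_spec hp hr hap i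
  unfold blocStart
  rw [bloc_last hp hr hap i]
  exact fun h => hne h.symm

lemma no_start_inside (hp : CyclePeriodic a r) (hr : 1 < r) (hap : CycleAperiodic a r)
    {i k : ℤ} (h1 : i < k) (h2 : k < i + blocLen a i) : ¬ blocStart a k := by
  obtain ⟨_, _, hconst⟩ := blocLen_spec hp hr hap i
  have e1 : a k = a i := by
    have := hconst (k - i) (by omega) (by omega)
    rwa [show i + (k - i) = k by ring] at this
  have e2 : a (k - 1) = a i := by
    have := hconst (k - 1 - i) (by omega) (by omega)
    rwa [show i + (k - 1 - i) = k - 1 by ring] at this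
  unfold blocStart
  rw [e1, e2]
  simp

/-- summing a periodic function at the next bloc start over all bloc starts of a window -/
lemma sum_next (hp : CyclePeriodic a r) (hr : 1 < r) (hap : CycleAperiodic a r) (t : ℤ)
    (g : ℤ → ℤ) (hg : ∀ x, g (x + r) = g x) :
    ∑ i ∈ (Finset.Ico t (t + r)).filter (fun i => blocStart a i), g (i + blocLen a i)
      = ∑ i ∈ (Finset.Ico t (t + r)).filter (fun i => blocStart a i), g i := by
  set S := (Finset.Ico t (t + r)).filter (fun i => blocStart a i) with hS
  set ψ : ℤ → ℤ := fun i => if i + blocLen a i < t + r then i + blocLen a i else i + blocLen a i - r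
    with hψ
  have hmemS : ∀ i, i ∈ S ↔ (t ≤ i ∧ i < t + r ∧ blocStart a i) := by
    intro i
    simp [hS, Finset.mem_filter, Finset.mem_Ico, and_assoc]
  have hmaps : ∀ i ∈ S, ψ i ∈ S := by
    intro i hi
    rw [hmemS] at hi ⊢
    obtain ⟨hi1, hi2, hi3⟩ := hi
    obtain ⟨⟨hL1, hL2⟩, _, _⟩ := blocLen_spec hp hr hap i
    have hbs := next_blocStart hp hr hap i
    by_cases h : i + blocLen a i < t + r
    · simp only [hψ, if_pos h]
      exact ⟨by omega, h, hbs⟩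
    · simp only [hψ, if_neg h]
      refine ⟨by omega, by omega, ?_⟩
      rw [← blocStart_per hp]
      rwa [show i + blocLen a i - r + r = i + blocLen a i by ring]
  have hkey : ∀ i ∈ S, ∀ j ∈ S, i < j → ψ i ≠ ψ j := by
    intro i hi j hj hij
    rw [hmemS] at hi hj
    obtain ⟨⟨hLi1, hLi2⟩, _, _⟩ := blocLen_spec hp hr hap i
    obtain ⟨⟨hLj1, hLj2⟩, _, _⟩ := blocLen_spec hp hr hap j
    intro heq
    by_cases h1 : i + blocLen a i < t + r <;> by_cases h2 : j + blocLen a j < t + r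
    · simp only [hψ, if_pos h1, if_pos h2] at heq
      exact no_start_inside hp hr hap hij (by omega) hj.2.2
    · -- i unwrapped, j wrapped : i + Li = j + Lj - r, so i + r ∈ (j, j + Lj)
      simp only [hψ, if_pos h1, if_neg h2] at heq
      have hbs : blocStart a (i + r) := (blocStart_per hp i).mpr hi.2.2
      exact no_start_inside hp hr hap (show j < i + r by omega) (by omega) hbs
    · -- i wrapped, j unwrapped : i + Li - r = j + Lj, so j ∈ (i, i + Li)
      simp only [hψ, if_neg h1, if_pos h2] at heq
      exact no_start_inside hp hr hap hij (by omega) hj.2.2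
    · simp only [hψ, if_neg h1, if_neg h2] at heq
      exact no_start_inside hp hr hap hij (by omega) hj.2.2
  have hinj : ∀ i ∈ S, ∀ j ∈ S, ψ i = ψ j → i = j := by
    intro i hi j hj heq
    rcases lt_trichotomy i j with h | h | h
    · exact absurd heq (hkey i hi j hj h)
    · exact h
    · exact absurd heq.symm (hkey j hj i hi h)
  have himg : S.image ψ = S := by
    apply Finset.eq_of_subset_of_card_le
    · intro y hy
      obtain ⟨x, hx, rfl⟩ := Finset.mem_image.mp hy
      exact hmaps x hx
    · rw [Finset.card_image_of_injOn (fun x hx y hy => hinj x hx y hy)]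
  have hgψ : ∀ i ∈ S, g (i + blocLen a i) = g (ψ i) := by
    intro i _
    by_cases h : i + blocLen a i < t + r
    · simp [hψ, if_pos h]
    · simp only [hψ, if_neg h]
      rw [← hg (i + blocLen a i - r), show i + blocLen a i - r + r = i + blocLen a i by ring]
  calc ∑ i ∈ S, g (i + blocLen a i) = ∑ i ∈ S, g (ψ i) := Finset.sum_congr rfl hgψ
    _ = ∑ j ∈ S.image ψ, g j := (Finset.sum_image hinj).symm
    _ = ∑ j ∈ S, g j := by rw [himg]

end Aux2
section Aux3
variable {a : ℤ → ℤ} {r : ℤ}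

lemma sg_per (hp : CyclePeriodic a r) (x : ℤ) : sg a (x + r) = sg a x := by
  unfold sg
  rw [show x + r - 1 = (x - 1) + r by ring, hp, hp]

lemma cpos_per (hp : CyclePeriodic a r) (x : ℤ) : cpos a (x + r) = cpos a x := by
  unfold cpos
  rw [hp]

lemma two_eps (hp : CyclePeriodic a r) (hr : 1 < r) (hap : CycleAperiodic a r) {i : ℤ}
    (hbs : blocStart a i) : 2 * blocEps a i = sg a i - sg a (i + blocLen a i) := by
  have hlast : a (i + blocLen a i - 1) = a i := bloc_last hp hr hap i
  obtain ⟨_, hne2, _⟩ := blocLen_spec hp hr hap i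
  have hbs' : a (i - 1) ≠ a i := hbs
  rcases lt_or_gt_of_ne hbs' with h1 | h1 <;> rcases lt_or_gt_of_ne hne2 with h2 | h2 <;>
    simp [blocEps, sg, hlast, h1, h2, not_lt.mpr h1.le, not_lt.mpr h2.le, asymm h1, asymm h2]

lemma telescope (hr : 0 < r) (t : ℤ) (c : ℤ → ℤ) (hc : ∀ x, c (x + r) = c x) :
    ∑ i ∈ Finset.Ico t (t + r), c (i - 1) = ∑ i ∈ Finset.Ico t (t + r), c i := by
  have h1 : ∑ i ∈ Finset.Ico t (t + r), c (i - 1)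
      = ∑ i ∈ Finset.Ico (t - 1) (t + r - 1), c i := by
    apply Finset.sum_nbij' (fun i => i - 1) (fun j => j + 1) <;>
      intros <;> simp_all [Finset.mem_Ico] <;> omega
  have e1 : Finset.Ico (t - 1) (t + r - 1) = insert (t - 1) (Finset.Ico t (t + r - 1)) := by
    ext x; simp [Finset.mem_Ico]; omega
  have e2 : Finset.Ico t (t + r) = insert (t + r - 1) (Finset.Ico t (t + r - 1)) := by
    ext x; simp [Finset.mem_Ico]; omega
  have hc' : c (t - 1) = c (t + r - 1) := by
    rw [show t + r - 1 = (t - 1) + r by ring, hc]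
  rw [h1, e1, e2, Finset.sum_insert (by simp [Finset.mem_Ico]),
    Finset.sum_insert (by simp [Finset.mem_Ico]), hc']

lemma gamma3'_eq_P (hp : CyclePeriodic a r) (hr : 1 < r) (hap : CycleAperiodic a r) (t : ℤ) :
    ∑ i ∈ Finset.Ico t (t + r), (if blocStart a i ∧ 0 ≤ a i then blocEps a i else 0)
      = ∑ i ∈ Finset.Ico t (t + r), (if partStart a i then (1 : ℤ) else 0) := by
  set W := Finset.Ico t (t + r) with hW
  set h0 : ℤ → ℤ := fun x => cpos a (x - 1) * sg a x with hh0
  have hh0per : ∀ x, h0 (x + r) = h0 x := by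
    intro x
    simp only [hh0]
    rw [show x + r - 1 = (x - 1) + r by ring, cpos_per hp, sg_per hp]
  -- second piece of 2ε transported to the next bloc start
  have eB : ∑ i ∈ W, (if blocStart a i then cpos a i * sg a (i + blocLen a i) else 0)
      = ∑ i ∈ W, (if blocStart a i then cpos a (i - 1) * sg a i else 0) := by
    rw [← Finset.sum_filter, ← Finset.sum_filter]
    have e2 : ∀ i ∈ W.filter (fun i => blocStart a i),
        cpos a i * sg a (i + blocLen a i) = h0 (i + blocLen a i) := by
      intro i _
      simp only [hh0]
      rw [show i + blocLen a i - 1 = i + (blocLen a i - 1) by ring]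
      unfold cpos
      obtain ⟨⟨hL1, _⟩, _, hconst⟩ := blocLen_spec hp hr hap i
      rw [hconst (blocLen a i - 1) (by omega) (by omega)]
    rw [Finset.sum_congr rfl e2, sum_next hp hr hap t h0 hh0per]
  have step1 : ∑ i ∈ W, (if blocStart a i ∧ 0 ≤ a i then 2 * blocEps a i else 0)
      = ∑ i ∈ W, ((if blocStart a i then cpos a i * sg a i else 0)
          - (if blocStart a i then cpos a (i - 1) * sg a i else 0)) := by
    rw [Finset.sum_sub_distrib, ← eB, ← Finset.sum_sub_distrib]
    apply Finset.sum_congr rfl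
    intro i _
    by_cases hbs : blocStart a i
    · by_cases hpos : 0 ≤ a i
      · rw [if_pos ⟨hbs, hpos⟩, if_pos hbs, if_pos hbs, two_eps hp hr hap hbs]
        unfold cpos
        rw [if_pos hpos]
        ring
      · rw [if_neg (by tauto), if_pos hbs, if_pos hbs]
        unfold cpos
        rw [if_neg hpos]
        ring
    · rw [if_neg (by tauto), if_neg hbs, if_neg hbs]
      ring
  have step2 : ∀ i, ((if blocStart a i then cpos a i * sg a i else 0)
          - (if blocStart a i then cpos a (i - 1) * sg a i else 0))
      = 2 * (if partStart a i then (1 : ℤ) else 0) - (cpos a i - cpos a (i - 1)) := by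
    intro i
    by_cases hbs : blocStart a i
    · have hne : a (i - 1) ≠ a i := hbs
      rw [if_pos hbs, if_pos hbs]
      unfold cpos sg partStart
      rcases le_or_gt 0 (a i) with h1 | h1 <;> rcases le_or_gt 0 (a (i - 1)) with h2 | h2 <;>
        rcases lt_trichotomy (a (i - 1)) (a i) with h3 | h3 | h3 <;>
        simp_all <;> omega
    · have heq : a (i - 1) = a i := not_not.mp hbs
      rw [if_neg hbs, if_neg hbs]
      have hps : ¬ partStart a i := by
        unfold partStart
        rw [heq]
        omega
      unfold cpos
      rw [heq, if_neg hps]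
      ring
  have step3 : ∑ i ∈ W, (cpos a i - cpos a (i - 1)) = 0 := by
    rw [Finset.sum_sub_distrib, telescope (by omega) t (cpos a) (cpos_per hp), sub_self]
  have main : ∑ i ∈ W, (if blocStart a i ∧ 0 ≤ a i then 2 * blocEps a i else 0)
      = 2 * ∑ i ∈ W, (if partStart a i then (1 : ℤ) else 0) := by
    rw [step1, Finset.sum_congr rfl (fun i _ => step2 i), Finset.sum_sub_distrib, step3,
      sub_zero, ← Finset.mul_sum]
  have lhs2 : ∑ i ∈ W, (if blocStart a i ∧ 0 ≤ a i then 2 * blocEps a i else 0)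
      = 2 * ∑ i ∈ W, (if blocStart a i ∧ 0 ≤ a i then blocEps a i else 0) := by
    rw [Finset.mul_sum]
    apply Finset.sum_congr rfl
    intro i _
    by_cases h : blocStart a i ∧ 0 ≤ a i <;> simp [h]
  omega

end Aux3
noncomputable def back (a : ℤ → ℤ) (k : ℤ) : ℤ := sInf {l : ℤ | 0 ≤ l ∧ a (k - l - 1) < 0}

section Aux4
variable {a : ℤ → ℤ} {r : ℤ}

lemma partStart_per (hp : CyclePeriodic a r) (i : ℤ) : partStart a (i + r) ↔ partStart a i := by
  unfold partStart
  rw [show i + r - 1 = (i - 1) + r by ring, hp, hp]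

lemma partLen_spec (hp : CyclePeriodic a r) (hr : 1 < r) {i : ℤ} (hps : partStart a i) :
    (0 < partLen a i ∧ partLen a i < r) ∧ a (i + partLen a i) < 0 ∧
      ∀ l, 0 ≤ l → l < partLen a i → 0 ≤ a (i + l) := by
  have hmem0 : a (i + (r - 1)) < 0 := by
    rw [show i + (r - 1) = (i - 1) + r by ring, hp]
    exact hps.2
  have hne : {l : ℤ | 0 < l ∧ a (i + l) < 0}.Nonempty := ⟨r - 1, by omega, hmem0⟩
  have hbdd : BddBelow {l : ℤ | 0 < l ∧ a (i + l) < 0} := ⟨0, fun x hx => hx.1.le⟩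
  have hpleq : partLen a i = sInf {l : ℤ | 0 < l ∧ a (i + l) < 0} := rfl
  have hmem := Int.csInf_mem hne hbdd
  rw [← hpleq] at hmem
  have hle : partLen a i ≤ r - 1 := by
    rw [hpleq]; exact csInf_le hbdd ⟨by omega, hmem0⟩
  refine ⟨⟨hmem.1, by omega⟩, hmem.2, fun l hl0 hl => ?_⟩
  rcases eq_or_lt_of_le hl0 with h' | h'
  · rw [← h']; simpa using hps.1
  · by_contra hneg'
    have : partLen a i ≤ l := by rw [hpleq]; exact csInf_le hbdd ⟨h', by omega⟩
    omega

lemma partLen_per (hp : CyclePeriodic a r) (i : ℤ) : partLen a (i + r) = partLen a i := by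
  unfold partLen
  congr 1
  ext l
  have h1 : a (i + r + l) = a (i + l) := by
    rw [show i + r + l = (i + l) + r by ring, hp]
  simp [h1]

lemma back_spec (hp : CyclePeriodic a r) (hr : 0 < r) (hneg : ∃ x, a x < 0) (k : ℤ) :
    (0 ≤ back a k ∧ back a k < r) ∧ a (k - back a k - 1) < 0 ∧
      ∀ l, 0 ≤ l → l < back a k → 0 ≤ a (k - l - 1) := by
  obtain ⟨x, hx⟩ := hneg
  obtain ⟨j, h1, h2⟩ := reduce hp hr (k - r) x
  have hwa : a (x + j * r) = a x := per_mul hp j x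
  have hmem0 : a (k - (k - 1 - (x + j * r)) - 1) < 0 := by
    rw [show k - (k - 1 - (x + j * r)) - 1 = x + j * r by ring, hwa]
    exact hx
  have hne : {l : ℤ | 0 ≤ l ∧ a (k - l - 1) < 0}.Nonempty :=
    ⟨k - 1 - (x + j * r), by omega, hmem0⟩
  have hbdd : BddBelow {l : ℤ | 0 ≤ l ∧ a (k - l - 1) < 0} := ⟨0, fun y hy => hy.1⟩
  have hbeq : back a k = sInf {l : ℤ | 0 ≤ l ∧ a (k - l - 1) < 0} := rfl
  have hmem := Int.csInf_mem hne hbdd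
  rw [← hbeq] at hmem
  have hle : back a k ≤ k - 1 - (x + j * r) := by
    rw [hbeq]; exact csInf_le hbdd ⟨by omega, hmem0⟩
  refine ⟨⟨hmem.1, by omega⟩, hmem.2, fun l hl0 hl => ?_⟩
  by_contra hneg'
  have : back a k ≤ l := by rw [hbeq]; exact csInf_le hbdd ⟨hl0, by omega⟩
  omega

lemma back_per (hp : CyclePeriodic a r) (k : ℤ) : back a (k + r) = back a k := by
  unfold back
  congr 1
  ext l
  have h1 : a (k + r - l - 1) = a (k - l - 1) := by
    rw [show k + r - l - 1 = (k - l - 1) + r by ring, hp]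
  simp [h1]

lemma pstart (hp : CyclePeriodic a r) (hr : 0 < r) (hneg : ∃ x, a x < 0) {k : ℤ}
    (hk : 0 ≤ a k) : partStart a (k - back a k) := by
  obtain ⟨⟨hb0, _⟩, hb1, hb2⟩ := back_spec hp hr hneg k
  constructor
  · rcases eq_or_lt_of_le hb0 with h' | h'
    · rw [show k - back a k = k by omega]
      exact hk
    · have := hb2 (back a k - 1) (by omega) (by omega)
      rwa [show k - (back a k - 1) - 1 = k - back a k by ring] at this
  · rwa [show k - back a k - 1 = k - back a k - 1 by ring]

lemma p_mem (hp : CyclePeriodic a r) (hr : 1 < r) (hneg : ∃ x, a x < 0) {k : ℤ}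
    (hk : 0 ≤ a k) : back a k < partLen a (k - back a k) := by
  obtain ⟨⟨hb0, hb1⟩, hb2, hb3⟩ := back_spec hp (by omega) hneg k
  have hps := pstart hp (by omega) hneg hk
  obtain ⟨⟨hpl0, hpl1⟩, hpl2, hpl3⟩ := partLen_spec hp hr hps
  by_contra h
  push_neg at h
  set pl := partLen a (k - back a k) with hpl
  rcases eq_or_lt_of_le h with h' | h'
  · rw [show k - back a k + pl = k by omega] at hpl2
    omega
  · have := hb3 (back a k - pl - 1) (by omega) (by omega)
    rw [show k - (back a k - pl - 1) - 1 = k - back a k + pl by ring] at this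
    omega

lemma p_unique (hp : CyclePeriodic a r) (hr : 1 < r) {i k : ℤ} (hps : partStart a i)
    (h1 : i ≤ k) (h2 : k < i + partLen a i) : back a k = k - i := by
  obtain ⟨⟨hpl0, hpl1⟩, hpl2, hpl3⟩ := partLen_spec hp hr hps
  have hbdd : BddBelow {l : ℤ | 0 ≤ l ∧ a (k - l - 1) < 0} := ⟨0, fun y hy => hy.1⟩
  have hmemki : k - i ∈ {l : ℤ | 0 ≤ l ∧ a (k - l - 1) < 0} := by
    refine ⟨by omega, ?_⟩
    rw [show k - (k - i) - 1 = i - 1 by ring]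
    exact hps.2
  have hbeq : back a k = sInf {l : ℤ | 0 ≤ l ∧ a (k - l - 1) < 0} := rfl
  apply le_antisymm
  · rw [hbeq]; exact csInf_le hbdd hmemki
  · rw [hbeq]
    apply le_csInf ⟨k - i, hmemki⟩
    rintro l ⟨hl0, hl1⟩
    by_contra hlt
    push_neg at hlt
    have := hpl3 (k - l - 1 - i) (by omega) (by omega)
    rw [show i + (k - l - 1 - i) = k - l - 1 by ring] at this
    omega

end Aux4
section Aux5
variable {a : ℤ → ℤ} {r : ℤ}

lemma sumA (hp : CyclePeriodic a r) (hr : 1 < r) (hneg : ∃ x, a x < 0) (t : ℤ) :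
    ∑ i ∈ Finset.Ico t (t + r), (if partStart a i then partLen a i else 0)
      = ∑ i ∈ Finset.Ico t (t + r), (if 0 ≤ a i then (1 : ℤ) else 0) := by
  have hr0 : (0 : ℤ) < r := by omega
  set W := Finset.Ico t (t + r) with hW
  set Wpos := W.filter (fun k => 0 ≤ a k) with hWpos
  set f : ℤ → ℤ := fun k => if k - back a k < t then k - back a k + r else k - back a k with hf
  have hRHS : ∑ i ∈ W, (if 0 ≤ a i then (1 : ℤ) else 0) = (Wpos.card : ℤ) := by
    rw [Finset.sum_boole]
  have hmaps : ∀ k ∈ Wpos, f k ∈ W := by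
    intro k hk
    simp only [hWpos, hW, Finset.mem_filter, Finset.mem_Ico] at hk
    obtain ⟨⟨hk1, hk2⟩, hk0⟩ := hk
    obtain ⟨⟨hb0, hb1⟩, _, _⟩ := back_spec hp hr0 hneg k
    simp only [hf, hW, Finset.mem_Ico]
    by_cases h : k - back a k < t
    · rw [if_pos h]; omega
    · rw [if_neg h]; omega
  have hcard : Wpos.card = ∑ i ∈ W, (Wpos.filter (fun k => f k = i)).card :=
    Finset.card_eq_sum_card_fiberwise hmaps
  have hfiber : ∀ i ∈ W, ((Wpos.filter (fun k => f k = i)).card : ℤ)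
      = if partStart a i then partLen a i else 0 := by
    intro i hi
    simp only [hW, Finset.mem_Ico] at hi
    by_cases hps : partStart a i
    · rw [if_pos hps]
      obtain ⟨⟨hpl0, hpl1⟩, hpl2, hpl3⟩ := partLen_spec hp hr hps
      have hfib : Wpos.filter (fun k => f k = i)
          = (Finset.Ico i (i + partLen a i)).image (fun x => if x < t + r then x else x - r) := by
        ext k
        simp only [hWpos, hW, Finset.mem_filter, Finset.mem_Ico, Finset.mem_image]
        constructor
        · rintro ⟨⟨⟨hk1, hk2⟩, hk0⟩, hfk⟩
          obtain ⟨⟨hb0, hb1⟩, _, _⟩ := back_spec hp hr0 hneg k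
          have hpm := p_mem hp hr hneg hk0
          simp only [hf] at hfk
          by_cases h : k - back a k < t
          · rw [if_pos h] at hfk
            -- k - back a k = i - r ; use x = k + r
            have hpli : partLen a i = partLen a (k - back a k) := by
              rw [← hfk, partLen_per hp]
            refine ⟨k + r, ⟨by omega, by omega⟩, ?_⟩
            rw [if_neg (by omega)]
            ring
          · rw [if_neg h] at hfk
            have hpli : partLen a i = partLen a (k - back a k) := by rw [← hfk]
            refine ⟨k, ⟨by omega, by omega⟩, by rw [if_pos (by omega)]⟩
        · rintro ⟨x, ⟨hx1, hx2⟩, hxk⟩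
          by_cases hx : x < t + r
          · rw [if_pos hx] at hxk
            subst hxk
            have h0 : 0 ≤ a x := by
              have := hpl3 (x - i) (by omega) (by omega)
              rwa [show i + (x - i) = x by ring] at this
            have hbx : back a x = x - i := p_unique hp hr hps hx1 hx2
            refine ⟨⟨⟨by omega, hx⟩, h0⟩, ?_⟩
            simp only [hf, hbx]
            rw [if_neg (by omega)]
            omega
          · rw [if_neg hx] at hxk
            subst hxk
            have h0 : 0 ≤ a (x - r) := by
              have h0' : 0 ≤ a x := by
                have := hpl3 (x - i) (by omega) (by omega)
                rwa [show i + (x - i) = x by ring] at this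
              rwa [per_sub hp]
            have hbx : back a x = x - i := p_unique hp hr hps (by omega) hx2
            have hbxr : back a (x - r) = back a x := by
              rw [← back_per hp (x - r), show x - r + r = x by ring]
            refine ⟨⟨⟨by omega, by omega⟩, h0⟩, ?_⟩
            simp only [hf, hbxr, hbx]
            rw [if_pos (by omega)]
            omega
      rw [hfib, Finset.card_image_of_injOn, Int.card_Ico]
      · rw [Int.toNat_of_nonneg (by omega)]
        ring
      · intro x hx y hy hxy
        simp only [Finset.coe_Ico, Set.mem_Ico] at hx hy
        by_cases h1 : x < t + r <;> by_cases h2 : y < t + r <;>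
          simp only [if_pos, if_neg, h1, h2, ite_true, ite_false] at hxy <;> omega
    · rw [if_neg hps]
      have : Wpos.filter (fun k => f k = i) = ∅ := by
        rw [Finset.filter_eq_empty_iff]
        intro k hk
        simp only [hWpos, Finset.mem_filter] at hk
        have hpsk := pstart hp hr0 hneg hk.2
        simp only [hf]
        by_cases h : k - back a k < t
        · rw [if_pos h]
          intro hcontra
          rw [← hcontra] at hps
          exact hps ((partStart_per hp _).mpr hpsk)
        · rw [if_neg h]
          intro hcontra
          rw [← hcontra] at hps
          exact hps hpsk
      rw [this]
      simp
  calc ∑ i ∈ W, (if partStart a i then partLen a i else 0)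
      = ∑ i ∈ W, ((Wpos.filter (fun k => f k = i)).card : ℤ) :=
        (Finset.sum_congr rfl hfiber).symm
    _ = ((∑ i ∈ W, (Wpos.filter (fun k => f k = i)).card : ℕ) : ℤ) := by push_cast; ring
    _ = (Wpos.card : ℤ) := by rw [← hcard]
    _ = ∑ i ∈ W, (if 0 ≤ a i then (1 : ℤ) else 0) := hRHS.symm

end Aux5

section Aux6
variable {a : ℤ → ℤ} {r : ℤ}

lemma zeroPart_iff (hp : CyclePeriodic a r) (hr : 1 < r) (hap : CycleAperiodic a r) (i : ℤ) :
    (partStart a i ∧ ∀ k ∈ Finset.Ico i (i + partLen a i), a k = 0)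
      ↔ (blocStart a i ∧ a i = 0 ∧ blocEps a i = 1) := by
  constructor
  · rintro ⟨hps, hz⟩
    obtain ⟨⟨hpl0, hpl1⟩, hpl2, hpl3⟩ := partLen_spec hp hr hps
    have h0 : a i = 0 := hz i (Finset.mem_Ico.mpr ⟨le_refl i, by omega⟩)
    have hbs : blocStart a i := by
      unfold blocStart
      have := hps.2
      omega
    have hbleq : blocLen a i = partLen a i := by
      obtain ⟨⟨hbl0, _⟩, hblne, hblconst⟩ := blocLen_spec hp hr hap i
      have hbdd : BddBelow {l : ℤ | 0 < l ∧ a (i + l) ≠ a i} := ⟨0, fun x hx => hx.1.le⟩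
      have hle : blocLen a i ≤ partLen a i := by
        have : blocLen a i = sInf {l : ℤ | 0 < l ∧ a (i + l) ≠ a i} := rfl
        rw [this]
        exact csInf_le hbdd ⟨hpl0, by omega⟩
      rcases eq_or_lt_of_le hle with h' | h'
      · exact h'
      · exfalso
        have := hz (i + blocLen a i) (Finset.mem_Ico.mpr ⟨by omega, by omega⟩)
        exact hblne (by omega)
    refine ⟨hbs, h0, ?_⟩
    have c1 : a (i - 1) < a i := by
      have := hps.2
      omega
    have c2 : a (i + blocLen a i) < a i := by
      rw [hbleq]
      omega
    unfold blocEps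
    rw [if_pos ⟨c1, c2⟩]
  · rintro ⟨hbs, h0, hε⟩
    obtain ⟨⟨hbl0, hbl1⟩, hblne, hblconst⟩ := blocLen_spec hp hr hap i
    have hcond : a (i - 1) < a i ∧ a (i + blocLen a i) < a i := by
      by_contra h
      unfold blocEps at hε
      rw [if_neg h] at hε
      split at hε <;> omega
    have hps : partStart a i := ⟨by omega, by omega⟩
    obtain ⟨⟨hpl0, hpl1⟩, hpl2, hpl3⟩ := partLen_spec hp hr hps
    have hpleq : partLen a i = blocLen a i := by
      have hbdd : BddBelow {l : ℤ | 0 < l ∧ a (i + l) < 0} := ⟨0, fun x hx => hx.1.le⟩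
      have hle : partLen a i ≤ blocLen a i := by
        have : partLen a i = sInf {l : ℤ | 0 < l ∧ a (i + l) < 0} := rfl
        rw [this]
        exact csInf_le hbdd ⟨hbl0, by omega⟩
      rcases eq_or_lt_of_le hle with h' | h'
      · exact h'
      · exfalso
        have := hblconst (partLen a i) (by omega) h'
        omega
    refine ⟨hps, fun k hk => ?_⟩
    rw [Finset.mem_Ico] at hk
    have := hblconst (k - i) (by omega) (by omega)
    rw [show i + (k - i) = k by ring] at this
    omega

end Aux6

/-- For an aperiodic cycle of length `r > 1`, `θ(a) = γ₁(a) + γ₃(a)`. -/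
theorem thetaSum_eq_gammaOne_add_gammaThree (a : ℤ → ℤ) (r : ℤ) (hr : 1 < r)
    (hap : CycleAperiodic a r) (t : ℤ) :
    thetaSum a r t = gammaOne a r t + gammaThree a r t := by
  have hp : CyclePeriodic a r := hap.1
  have hr0 : (0 : ℤ) < r := by omega
  unfold thetaSum gammaOne gammaThree
  set W := Finset.Ico t (t + r) with hW
  have hg3 : ∀ i, (if blocStart a i ∧ 0 ≤ a i then blocEpsStar a i else 0)
      = (if blocStart a i ∧ 0 ≤ a i then blocEps a i else 0)
        - (if blocStart a i ∧ a i = 0 ∧ blocEps a i = 1 then (1 : ℤ) else 0) := by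
    intro i
    unfold blocEpsStar
    by_cases h1 : blocStart a i <;> by_cases h2 : a i = 0 <;>
      by_cases h3 : blocEps a i = 1 <;> by_cases h4 : 0 ≤ a i <;>
      simp [h1, h2, h3, h4] <;> omega
  have hg3sum : ∑ i ∈ W, (if blocStart a i ∧ 0 ≤ a i then blocEpsStar a i else 0)
      = (∑ i ∈ W, (if blocStart a i ∧ 0 ≤ a i then blocEps a i else 0))
        - ∑ i ∈ W, (if blocStart a i ∧ a i = 0 ∧ blocEps a i = 1 then (1 : ℤ) else 0) := by
    rw [← Finset.sum_sub_distrib]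
    exact Finset.sum_congr rfl (fun i _ => hg3 i)
  by_cases hall : ∀ j ∈ Finset.Ico t (t + r), 0 ≤ a j
  · rw [if_pos hall]
    have hallx : ∀ x, 0 ≤ a x := by
      intro x
      obtain ⟨k, h1, h2⟩ := reduce hp hr0 t x
      have := hall (x + k * r) (Finset.mem_Ico.mpr ⟨h1, h2⟩)
      rwa [per_mul hp] at this
    have hnops : ∀ i, ¬ partStart a i := by
      intro i hps
      have := hallx (i - 1)
      have := hps.2
      omega
    have hγ1 : ∑ i ∈ W, (if 0 ≤ a i then (1 : ℤ) else 0) = r := by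
      rw [Finset.sum_congr rfl (fun i _ => if_pos (hallx i)), Finset.sum_const, Int.card_Ico]
      rw [show t + r - t = r by ring, nsmul_eq_mul, mul_one, Int.toNat_of_nonneg hr0.le]
    have hP0 : ∑ i ∈ W, (if partStart a i then (1 : ℤ) else 0) = 0 := by
      rw [Finset.sum_congr rfl (fun i _ => if_neg (hnops i)), Finset.sum_const_zero]
    have hZ0 : ∑ i ∈ W, (if blocStart a i ∧ a i = 0 ∧ blocEps a i = 1 then (1 : ℤ) else 0)
        = 0 := by
      rw [Finset.sum_congr rfl (fun i _ => ?_), Finset.sum_const_zero]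
      rw [if_neg]
      intro h
      exact hnops i ((zeroPart_iff hp hr hap i).mpr h).1
    rw [hγ1, hg3sum, gamma3'_eq_P hp hr hap t, hP0, hZ0]
    ring
  · rw [if_neg hall]
    push_neg at hall
    obtain ⟨j, hj, hjneg⟩ := hall
    have hneg : ∃ x, a x < 0 := ⟨j, by omega⟩
    have hth : ∀ i, (if partStart a i then thetaP a i else 0)
        = (if partStart a i then partLen a i else 0) + (if partStart a i then (1 : ℤ) else 0)
          - (if partStart a i ∧ ∀ k ∈ Finset.Ico i (i + partLen a i), a k = 0
              then (1 : ℤ) else 0) := by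
      intro i
      unfold thetaP
      by_cases hps : partStart a i
      · by_cases hz : ∀ k ∈ Finset.Ico i (i + partLen a i), a k = 0
        · rw [if_pos hps, if_pos hps, if_pos hps, if_pos hz, if_pos ⟨hps, hz⟩]
          ring
        · rw [if_pos hps, if_pos hps, if_pos hps, if_neg hz, if_neg (fun h => hz h.2)]
          ring
      · rw [if_neg hps, if_neg hps, if_neg hps, if_neg (fun h => hps h.1)]
        ring
    have hthsum : ∑ i ∈ W, (if partStart a i then thetaP a i else 0)
        = (∑ i ∈ W, (if partStart a i then partLen a i else 0))
          + (∑ i ∈ W, (if partStart a i then (1 : ℤ) else 0))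
          - ∑ i ∈ W, (if partStart a i ∧ ∀ k ∈ Finset.Ico i (i + partLen a i), a k = 0
              then (1 : ℤ) else 0) := by
      rw [← Finset.sum_add_distrib, ← Finset.sum_sub_distrib]
      exact Finset.sum_congr rfl (fun i _ => hth i)
    have hZeq : ∑ i ∈ W, (if partStart a i ∧ ∀ k ∈ Finset.Ico i (i + partLen a i), a k = 0
            then (1 : ℤ) else 0)
        = ∑ i ∈ W, (if blocStart a i ∧ a i = 0 ∧ blocEps a i = 1 then (1 : ℤ) else 0) := by
      apply Finset.sum_congr rfl
      intro i _
      exact if_congr (zeroPart_iff hp hr hap i) rfl rfl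
    rw [hthsum, hZeq, sumA hp hr hneg t, hg3sum, gamma3'_eq_P hp hr hap t]
    ring
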